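/- Let A(λ), B(λ) ∈ M_{n×n}(ℂ[λ]) be nonsingular matrices that are equivalent, with common Smith normal form S(λ) = diag(s_1(λ), ..., s_{n−1}(λ), s_n(λ)). Let d(λ) = s_1(λ)···s_{n−1}(λ) and let C(λ) be the matrix with B*(λ) = d(λ)·C(λ), where B*(λ) is the adjugate of B(λ). Then A(λ) and B(λ) are semi-scalar equivalent if and only if there exists a nonsingular constant matrix V ∈ M_{n×n}(ℂ) such that s_n(λ) divides every entry of C(λ)·V·A(λ) in ℂ[λ]. -/

import Mathlib

open Polynomial

/-- **Corollary 3.1.** Let `A(λ), B(λ)` be nonsingular `n × n` matrices over `ℂ[λ]` that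
are equivalent, with common Smith normal form `diag(s₁, …, sₙ)`. Let `d = s₁ ⋯ s_{n-1}`
and write `B*(λ) = d(λ)·C(λ)`. Then `A(λ)` and `B(λ)` are semi-scalar equivalent iff there
exists a nonsingular constant matrix `V` such that `sₙ(λ)` divides every entry of
`C(λ)·V·A(λ)` in `ℂ[λ]`. -/
theorem semi_scalar_equivalent_iff_exists_nonsingular_solution_complex
    {n : ℕ} (hn : 1 ≤ n)
    (A B : Matrix (Fin n) (Fin n) ℂ[X]) (hA : A.det ≠ 0) (hB : B.det ≠ 0)
    (s : Fin n → ℂ[X]) (hmonic : ∀ i, (s i).Monic)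
    (hchain : ∀ i j : Fin n, i ≤ j → s i ∣ s j)
    (hsmithA : ∃ U V : Matrix (Fin n) (Fin n) ℂ[X],
      IsUnit U.det ∧ IsUnit V.det ∧ U * A * V = Matrix.diagonal s)
    (hsmithB : ∃ U V : Matrix (Fin n) (Fin n) ℂ[X],
      IsUnit U.det ∧ IsUnit V.det ∧ U * B * V = Matrix.diagonal s)
    (d : ℂ[X]) (hd : d = ∏ i ∈ Finset.univ.filter (fun i : Fin n => (i : ℕ) < n - 1), s i)
    (Cm : Matrix (Fin n) (Fin n) ℂ[X]) (hCm : ∀ p q, B.adjugate p q = d * Cm p q) :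
    (∃ P : Matrix (Fin n) (Fin n) ℂ, IsUnit P.det ∧
      ∃ Q : Matrix (Fin n) (Fin n) ℂ[X], IsUnit Q.det ∧
        A = P.map Polynomial.C * B * Q) ↔
    (∃ V : Matrix (Fin n) (Fin n) ℂ, V.det ≠ 0 ∧
      ∀ p q : Fin n, s ⟨n - 1, by omega⟩ ∣ (Cm * V.map Polynomial.C * A) p q) := by
  obtain ⟨U1, V1, hU1, hV1, hB1⟩ := hsmithB
  obtain ⟨U2, V2, hU2, hV2, hA1⟩ := hsmithA
  set last : Fin n := ⟨n - 1, by omega⟩ with hlastdef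
  set slast : ℂ[X] := s last with hslastdef
  -- the product of all invariant factors is d * slast
  have hSprod : (∏ i, s i) = d * slast := by
    rw [← Finset.prod_erase_mul Finset.univ s (Finset.mem_univ last)]
    congr 1
    rw [hd]
    apply Finset.prod_congr _ (fun _ _ => rfl)
    ext i
    have hi := i.isLt
    simp only [Finset.mem_filter, Finset.mem_univ, Finset.mem_erase, true_and, and_true,
      ne_eq, Fin.ext_iff]
    simp only [hlastdef, Fin.val_mk]
    omega
  have hdmonic : d.Monic := by
    rw [hd]; exact Polynomial.monic_prod_of_monic _ _ fun i _ => hmonic i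
  have hsm : slast.Monic := hmonic last
  have hdne : d ≠ 0 := hdmonic.ne_zero
  have hsne : slast ≠ 0 := hsm.ne_zero
  -- determinant facts
  set u : ℂ[X]ˣ := hU1.unit * hV1.unit with hudef
  have hu : (↑u : ℂ[X]) = U1.det * V1.det := by
    simp [hudef]
  have e0 : U1.det * B.det * V1.det = d * slast := by
    rw [← hSprod, ← Matrix.det_diagonal, ← hB1, Matrix.det_mul, Matrix.det_mul]
  have e2 : (↑u : ℂ[X]) * B.det = d * slast := by
    rw [hu]; linear_combination e0
  set uA : ℂ[X]ˣ := hU2.unit * hV2.unit with huAdef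
  have huA : (↑uA : ℂ[X]) = U2.det * V2.det := by
    simp [huAdef]
  have e0A : U2.det * A.det * V2.det = d * slast := by
    rw [← hSprod, ← Matrix.det_diagonal, ← hA1, Matrix.det_mul, Matrix.det_mul]
  have e2A : (↑uA : ℂ[X]) * A.det = d * slast := by
    rw [huA]; linear_combination e0A
  have hBdet : B.det = ↑u⁻¹ * (d * slast) := by
    rw [← e2, Units.inv_mul_cancel_left]
  -- adjugate facts
  have hadj : B.adjugate = d • Cm := by
    funext p q; simpa [Matrix.smul_apply] using hCm p q
  have hCmB : Cm * B = ((↑u⁻¹ : ℂ[X]) * slast) • (1 : Matrix (Fin n) (Fin n) ℂ[X]) := by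
    have h2 : B.adjugate * B = B.det • 1 := Matrix.adjugate_mul B
    rw [hadj, Matrix.smul_mul] at h2
    have h1 : d • (Cm * B) = d • (((↑u⁻¹ : ℂ[X]) * slast) • (1 : Matrix (Fin n) (Fin n) ℂ[X])) := by
      rw [h2, smul_smul]
      congr 1
      rw [hBdet]; ring
    funext p q
    have h3 := congrFun (congrFun h1 p) q
    simp only [Matrix.smul_apply, smul_eq_mul] at h3
    exact mul_left_cancel₀ hdne h3
  have hBCm : B * Cm = ((↑u⁻¹ : ℂ[X]) * slast) • (1 : Matrix (Fin n) (Fin n) ℂ[X]) := by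
    have h2 : B * B.adjugate = B.det • 1 := Matrix.mul_adjugate B
    rw [hadj, Matrix.mul_smul] at h2
    have h1 : d • (B * Cm) = d • (((↑u⁻¹ : ℂ[X]) * slast) • (1 : Matrix (Fin n) (Fin n) ℂ[X])) := by
      rw [h2, smul_smul]
      congr 1
      rw [hBdet]; ring
    funext p q
    have h3 := congrFun (congrFun h1 p) q
    simp only [Matrix.smul_apply, smul_eq_mul] at h3
    exact mul_left_cancel₀ hdne h3
  constructor
  · -- forward direction
    rintro ⟨P, hP, Q, hQ, hAeq⟩
    refine ⟨P⁻¹, (Matrix.isUnit_nonsing_inv_det P hP).ne_zero, fun p q => ?_⟩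
    have h1 : P⁻¹.map Polynomial.C * A = B * Q := by
      rw [hAeq, ← Matrix.mul_assoc, ← Matrix.mul_assoc, ← Matrix.map_mul,
        Matrix.nonsing_inv_mul P hP, Matrix.map_one _ (map_zero _) (map_one _), Matrix.one_mul]
    have h2 : Cm * P⁻¹.map Polynomial.C * A = ((↑u⁻¹ : ℂ[X]) * slast) • Q := by
      rw [Matrix.mul_assoc, h1, ← Matrix.mul_assoc, hCmB, Matrix.smul_mul, Matrix.one_mul]
    rw [h2, Matrix.smul_apply, smul_eq_mul]
    exact ⟨↑u⁻¹ * Q p q, by ring⟩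
  · -- backward direction
    rintro ⟨V, hV, hdvd⟩
    choose Q0 hQ0 using hdvd
    have hCVA : Cm * V.map Polynomial.C * A = slast • (Matrix.of Q0) := by
      funext p q
      simp only [Matrix.smul_apply, Matrix.of_apply, smul_eq_mul]
      exact hQ0 p q
    have h3 : slast • (B * Matrix.of Q0)
        = slast • ((↑u⁻¹ : ℂ[X]) • (V.map Polynomial.C * A)) := by
      calc slast • (B * Matrix.of Q0) = B * (slast • Matrix.of Q0) := (Matrix.mul_smul _ _ _).symm
        _ = B * (Cm * V.map Polynomial.C * A) := by rw [hCVA]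
        _ = (B * Cm) * (V.map Polynomial.C * A) := by
            rw [Matrix.mul_assoc, ← Matrix.mul_assoc B Cm, ← Matrix.mul_assoc]
        _ = ((↑u⁻¹ : ℂ[X]) * slast) • (V.map Polynomial.C * A) := by
            rw [hBCm, Matrix.smul_mul, Matrix.one_mul]
        _ = slast • ((↑u⁻¹ : ℂ[X]) • (V.map Polynomial.C * A)) := by
            rw [smul_smul, mul_comm]
    have h5 : B * Matrix.of Q0 = (↑u⁻¹ : ℂ[X]) • (V.map Polynomial.C * A) := by
      funext p q
      have h4 := congrFun (congrFun h3 p) q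
      simp only [Matrix.smul_apply, smul_eq_mul] at h4
      exact mul_left_cancel₀ hsne h4
    obtain ⟨r, hr, hrC⟩ := Polynomial.isUnit_iff.mp (u⁻¹).isUnit
    have hr0 : r ≠ 0 := hr.ne_zero
    have hVdu : IsUnit V.det := isUnit_iff_ne_zero.mpr hV
    refine ⟨r⁻¹ • V⁻¹, ?_, Matrix.of Q0, ?_, ?_⟩
    · rw [Matrix.det_smul]
      exact (IsUnit.pow _ (isUnit_iff_ne_zero.mpr (inv_ne_zero hr0))).mul
        (Matrix.isUnit_nonsing_inv_det V hVdu)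
    · -- IsUnit (Matrix.of Q0).det
      have eq1 : B.det * (Matrix.of Q0).det
          = (↑u⁻¹ : ℂ[X]) ^ n * (Polynomial.C V.det * A.det) := by
        have h := congrArg Matrix.det h5
        have hVC : (V.map ⇑(Polynomial.C : ℂ →+* ℂ[X])).det = Polynomial.C V.det :=
          by rw [← RingHom.mapMatrix_apply, ← RingHom.map_det]
        rw [Matrix.det_mul, Matrix.det_smul, Fintype.card_fin, Matrix.det_mul, hVC] at h
        exact h
      have key : A.det * ((↑uA : ℂ[X]) * (Matrix.of Q0).det)
          = A.det * ((↑u : ℂ[X]) * (↑u⁻¹ : ℂ[X]) ^ n * Polynomial.C V.det) := by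
        linear_combination (Matrix.of Q0).det * e2A - (Matrix.of Q0).det * e2
          + (↑u : ℂ[X]) * eq1
      have key2 : (↑uA : ℂ[X]) * (Matrix.of Q0).det
          = (↑u : ℂ[X]) * (↑u⁻¹ : ℂ[X]) ^ n * Polynomial.C V.det :=
        mul_left_cancel₀ hA key
      have hunit : IsUnit ((↑uA : ℂ[X]) * (Matrix.of Q0).det) := by
        rw [key2]
        exact (u.isUnit.mul ((u⁻¹).isUnit.pow n)).mul
          (Polynomial.isUnit_C.mpr hVdu)
      exact isUnit_of_mul_isUnit_right hunit
    · -- A = P.map C * B * Q0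
      have hPmap : (r⁻¹ • V⁻¹).map Polynomial.C
          = (Polynomial.C r⁻¹) • (V⁻¹).map Polynomial.C := by
        funext p q; simp [Matrix.map_apply]
      calc A = (Polynomial.C r⁻¹ * Polynomial.C r) • (((V⁻¹ * V).map Polynomial.C) * A) := by
            rw [← map_mul, inv_mul_cancel₀ hr0, map_one, one_smul,
              Matrix.nonsing_inv_mul V hVdu, Matrix.map_one _ (map_zero _) (map_one _),
              Matrix.one_mul]
        _ = Polynomial.C r⁻¹ • ((V⁻¹).map Polynomial.C * (Polynomial.C r • (V.map Polynomial.C * A))) := by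
            rw [Matrix.mul_smul, smul_smul, Matrix.map_mul, Matrix.mul_assoc]
        _ = Polynomial.C r⁻¹ • ((V⁻¹).map Polynomial.C * (B * Matrix.of Q0)) := by
            rw [h5, hrC]
        _ = (r⁻¹ • V⁻¹).map Polynomial.C * B * Matrix.of Q0 := by
            rw [hPmap, Matrix.smul_mul, Matrix.smul_mul, Matrix.mul_assoc]
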